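/- The two-sided Dyck-like language L₂ = { w ∈ {a,b}* | |w|_a = |w|_b } is not counting regular: its counting function satisfies f(2m) = C(2m, m) (central binomial coefficient) and f(2m+1) = 0, and this function is not eventually equal to the counting function of any regular language (equivalently, Σ f(n)xⁿ is not a rational power series). -/

import Mathlib

open Filter Finset


lemma count01 (w : List (Fin 2)) : w.count 0 + w.count 1 = w.length := by
  induction w with
  | nil => simp
  | cons a t ih =>
    fin_cases a <;> simp [List.count_cons] <;> omega

lemma countOfFn {n : ℕ} (v : Fin n → Fin 2) :
    (List.ofFn v).count 1 = (Finset.univ.filter (fun i => v i = 1)).card := by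
  rw [Finset.card_filter]
  induction n with
  | zero => simp
  | succ n ih =>
    rw [List.ofFn_succ, Fin.sum_univ_succ, List.count_cons, ih (fun i => v i.succ)]
    by_cases h : v 0 = 1 <;> simp [h] <;> omega

lemma part1 (m : ℕ) :
    Set.ncard {w : List (Fin 2) | w.count 0 = w.count 1 ∧ w.length = 2 * m}
      = Nat.choose (2 * m) m := by
  classical
  have hset : {w : List (Fin 2) | w.count 0 = w.count 1 ∧ w.length = 2 * m}
      = {w : List (Fin 2) | (w.length = 2 * m ∧ w.count 1 = m)} := by
    ext w
    have := count01 w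
    simp only [Set.mem_setOf_eq]
    omega
  rw [hset, ← Nat.card_coe_set_eq]
  have e1 : {w : List (Fin 2) // w.length = 2 * m ∧ w.count 1 = m} ≃
      {v : List.Vector (Fin 2) (2 * m) // v.toList.count 1 = m} :=
    { toFun := fun ⟨w, h1, h2⟩ => ⟨⟨w, h1⟩, h2⟩
      invFun := fun ⟨⟨w, h1⟩, h2⟩ => ⟨w, h1, h2⟩
      left_inv := fun ⟨w, h1, h2⟩ => rfl
      right_inv := fun ⟨⟨w, h1⟩, h2⟩ => rfl }
  have e2 : {v : List.Vector (Fin 2) (2 * m) // v.toList.count 1 = m} ≃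
      {f : Fin (2 * m) → Fin 2 // (Finset.univ.filter (fun i => f i = 1)).card = m} := by
    refine (Equiv.vectorEquivFin (Fin 2) (2 * m)).subtypeEquiv fun v => ?_
    have : v = List.Vector.ofFn (Equiv.vectorEquivFin (Fin 2) (2 * m) v) := by
      simp [Equiv.vectorEquivFin, List.Vector.ofFn_get]
    conv_lhs => rw [this]
    rw [List.Vector.toList_ofFn, countOfFn]
  have e3 : {f : Fin (2 * m) → Fin 2 // (Finset.univ.filter (fun i => f i = 1)).card = m} ≃
      {s : Finset (Fin (2 * m)) // s.card = m} :=
    { toFun := fun ⟨f, hf⟩ => ⟨Finset.univ.filter (fun i => f i = 1), hf⟩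
      invFun := fun ⟨s, hs⟩ => ⟨fun i => if i ∈ s then 1 else 0, by
        convert hs using 2
        ext i
        by_cases h : i ∈ s <;> simp [h]⟩
      left_inv := fun ⟨f, hf⟩ => by
        have h2 : ∀ x : Fin 2, x ≠ 1 → x = 0 := by decide
        ext i
        by_cases h : f i = 1
        · simp [h]
        · simp [h, h2 _ h]
      right_inv := fun ⟨s, hs⟩ => by
        ext i
        simp }
  exact (Nat.card_congr ((e1.trans e2).trans e3)).trans
    (by rw [Nat.card_eq_fintype_card, Fintype.card_finset_len, Fintype.card_fin])

lemma part2 (m : ℕ) :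
    Set.ncard {w : List (Fin 2) | w.count 0 = w.count 1 ∧ w.length = 2 * m + 1} = 0 := by
  have : {w : List (Fin 2) | w.count 0 = w.count 1 ∧ w.length = 2 * m + 1} = (∅ : Set _) := by
    ext w
    have := count01 w
    simp only [Set.mem_setOf_eq, Set.mem_empty_iff_false, iff_false, not_and]
    omega
  rw [this, Set.ncard_empty]



noncomputable def bb : ℕ → ℝ := fun m => (Nat.centralBinom m : ℝ)

lemma bb_pos (m : ℕ) : 0 < bb m := by
  unfold bb; exact_mod_cast Nat.centralBinom_pos m

lemma bb_succ (m : ℕ) : ((m : ℝ) + 1) * bb (m+1) = 2 * (2*m+1) * bb m := by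
  have := Nat.succ_mul_centralBinom_succ m
  have := congrArg (fun x : ℕ => (x : ℝ)) this
  push_cast at this
  simpa [bb] using this

lemma bb_sq_bound (m : ℕ) : bb m ^ 2 * (2*m+1) ≤ 16 ^ m := by
  induction m with
  | zero => simp [bb, Nat.centralBinom]
  | succ m ih =>
    have h1 := bb_succ m
    have hm : (0:ℝ) < (m:ℝ) + 1 := by positivity
    have h16 : (0:ℝ) < 16 ^ m := by positivity
    have hb := bb_pos m
    have key : ((m:ℝ)+1)^2 * (bb (m+1) ^ 2 * (2*(m+1)+1)) ≤ ((m:ℝ)+1)^2 * 16^(m+1) := by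
      have e : ((m:ℝ)+1)^2 * bb (m+1)^2 = (2*(2*m+1))^2 * bb m ^2 := by
        rw [← mul_pow, h1, mul_pow]
      have : ((m:ℝ)+1)^2 * (bb (m+1) ^ 2 * (2*(m+1)+1))
          = (2*(2*m+1))^2 * bb m^2 * (2*m+3) := by
        rw [← mul_assoc, e]; ring
      rw [this]
      have h2 : (2*(2*(m:ℝ)+1))^2 * (2*m+3) ≤ 16 * (2*m+1) * ((m:ℝ)+1)^2 := by nlinarith
      calc (2*(2*(m:ℝ)+1))^2 * bb m^2 * (2*m+3)
          = (bb m ^2 * (2*m+1)) * ((2*(2*m+1))^2 * (2*m+3) / (2*m+1)) := by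
            field_simp
        _ ≤ 16^m * (16 * ((m:ℝ)+1)^2) := by
            apply mul_le_mul ih ?_ ?_ (le_of_lt h16)
            · rw [div_le_iff₀ (by positivity)]; nlinarith
            · positivity
        _ = ((m:ℝ)+1)^2 * 16^(m+1) := by ring
    have := (mul_le_mul_iff_right₀ (by positivity : (0:ℝ) < ((m:ℝ)+1)^2)).mp key
    convert this using 2
    · rfl
    push_cast; ring

lemma bb_ratio : Tendsto (fun m => bb (m+1) / bb m) atTop (nhds 4) := by
  have h : ∀ m : ℕ, bb (m+1) / bb m = 4 - 2 / ((m:ℝ)+1) := by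
    intro m
    have h1 := bb_succ m
    have hb := (bb_pos m).ne'
    have hm : ((m:ℝ)+1) ≠ 0 := by positivity
    field_simp
    nlinarith [h1]
  simp_rw [h]
  have : Tendsto (fun m : ℕ => 2 / ((m:ℝ)+1)) atTop (nhds 0) := by
    have := tendsto_one_div_add_atTop_nhds_zero_nat (𝕜 := ℝ)
    have := this.const_mul (2:ℝ)
    simpa [div_eq_mul_inv, mul_comm] using this
  simpa using tendsto_const_nhds.sub this

lemma bb_ratio_pow (i : ℕ) : Tendsto (fun m => bb (m+i) / bb m) atTop (nhds (4^i)) := by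
  induction i with
  | zero =>
    have he : ∀ m : ℕ, bb (m+0) / bb m = 1 := fun m => div_self (bb_pos m).ne'
    simp_rw [he]
    simpa using (tendsto_const_nhds : Tendsto (fun _ : ℕ => (1:ℝ)) atTop _)
  | succ i ih =>
    have h1 : Tendsto (fun m => bb (m+i+1) / bb (m+i)) atTop (nhds 4) := by
      have := bb_ratio.comp (tendsto_add_atTop_nat i)
      simpa [Function.comp_def] using this
    have := h1.mul ih
    have he : ∀ m : ℕ, (bb (m+i+1) / bb (m+i)) * (bb (m+i) / bb m) = bb (m+(i+1)) / bb m :=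
      fun m => div_mul_div_cancel₀ (bb_pos (m+i)).ne' 
    simp_rw [he] at this
    convert this using 2
    ring
lemma bb_div_pow_tendsto : Tendsto (fun m => bb m / 4 ^ m) atTop (nhds 0) := by
  refine squeeze_zero (g := fun m : ℕ => Real.sqrt (1 / (2*(m:ℝ)+1)))
    (fun m => (div_pos (bb_pos m) (by positivity)).le) (fun m => ?_) ?_
  ·
    have h1 : (bb m / 4^m)^2 ≤ 1 / (2*(m:ℝ)+1) := by
      have hb := bb_sq_bound m
      have h4 : ((4:ℝ)^m)^2 = 16^m := by
        rw [← pow_mul, show 16 = (4:ℝ)^2 by norm_num, ← pow_mul]; ring_nf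
      rw [div_pow, h4, div_le_div_iff₀ (by positivity) (by positivity)]
      nlinarith [hb]
    have := Real.sqrt_le_sqrt h1
    rwa [Real.sqrt_sq (div_pos (bb_pos m) (by positivity)).le] at this
  · have ha : Tendsto (fun m : ℕ => 2*(m:ℝ)+1) atTop atTop :=
      tendsto_atTop_add_const_right _ 1 ((tendsto_natCast_atTop_atTop).const_mul_atTop (by norm_num))
    have h1 : Tendsto (fun m : ℕ => 1 / (2*(m:ℝ)+1)) atTop (nhds 0) := by
      simpa [one_div, Pi.inv_def] using ha.inv_tendsto_atTop
    have h2 := (Real.continuous_sqrt.tendsto 0).comp h1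
    rw [Real.sqrt_zero] at h2
    exact h2

lemma bb_shift_div_pow_tendsto (j : ℕ) :
    Tendsto (fun m => bb (m+j) / 4 ^ m) atTop (nhds 0) := by
  have h1 := bb_div_pow_tendsto.comp (tendsto_add_atTop_nat j)
  have h2 := h1.const_mul ((4:ℝ)^j)
  simp only [Function.comp] at h2
  have he : ∀ m : ℕ, (4:ℝ)^j * (bb (m+j) / 4^(m+j)) = bb (m+j) / 4^m := by
    intro m
    rw [pow_add]
    field_simp
  simp_rw [he] at h2
  simpa using h2

lemma no_recurrence : ∀ k : ℕ, ∀ c : ℕ → ℝ, ∀ N : ℕ, c k ≠ 0 →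
    (∀ m, N ≤ m → ∑ i ∈ Finset.range (k+1), c i * bb (m+i) = 0) → False := by
  intro k
  induction k using Nat.strong_induction_on with
  | _ k ih =>
  intro c N hc hrec
  match k, ih, hc, hrec with
  | 0, _, hc, hrec =>
    have h := hrec N le_rfl
    rw [Finset.sum_range_one] at h
    rcases mul_eq_zero.mp h with h | h
    · exact hc h
    · exact (bb_pos _).ne' h
  | (k+1), ih, hc, hrec =>
    classical
    -- step (a): P(4) = 0
    have h4 : ∑ i ∈ Finset.range (k+2), c i * 4^i = 0 := by
      have t1 : Tendsto (fun m => ∑ i ∈ Finset.range (k+2), c i * (bb (m+i) / bb m)) atTop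
          (nhds (∑ i ∈ Finset.range (k+2), c i * 4^i)) :=
        tendsto_finset_sum _ (fun i _ => (bb_ratio_pow i).const_mul (c i))
      have t2 : ∀ m, N ≤ m → ∑ i ∈ Finset.range (k+2), c i * (bb (m+i) / bb m) = 0 := by
        intro m hm
        simp_rw [← mul_div_assoc]
        rw [← Finset.sum_div, hrec m hm, zero_div]
      have t3 : Tendsto (fun m => ∑ i ∈ Finset.range (k+2), c i * (bb (m+i) / bb m)) atTop
          (nhds 0) := by
        refine Tendsto.congr' ?_ tendsto_const_nhds
        filter_upwards [eventually_ge_atTop N] with m hm using (t2 m hm).symm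
      exact tendsto_nhds_unique t1 t3
    -- synthetic division remainders
    set r : ℕ → ℝ := fun j => ∑ i ∈ Finset.Ico j (k+2), c i * 4^(i-j) with hrdef
    have hr0 : r 0 = 0 := by
      show ∑ i ∈ Finset.Ico 0 (k+2), c i * 4^(i-0) = 0
      rw [show Finset.Ico 0 (k+2) = Finset.range (k+2) by rw [Finset.range_eq_Ico],
        ← h4]
      exact Finset.sum_congr rfl (fun i _ => by rw [Nat.sub_zero])
    have hrtop : r (k+2) = 0 := by
      show ∑ i ∈ Finset.Ico (k+2) (k+2), c i * 4^(i-(k+2)) = 0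
      simp
    have hrk1 : r (k+1) = c (k+1) := by
      show ∑ i ∈ Finset.Ico (k+1) (k+2), c i * 4^(i-(k+1)) = c (k+1)
      rw [Finset.sum_eq_sum_Ico_succ_bot (by omega : k+1 < k+2)]
      simp
    have hsplit : ∀ j, j ≤ k+1 → r j = c j + 4 * r (j+1) := by
      intro j hj
      show ∑ i ∈ Finset.Ico j (k+2), c i * 4^(i-j)
        = c j + 4 * ∑ i ∈ Finset.Ico (j+1) (k+2), c i * 4^(i-(j+1))
      rw [Finset.sum_eq_sum_Ico_succ_bot (by omega : j < k+2)]
      simp only [Nat.sub_self, pow_zero, mul_one]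
      congr 1
      rw [Finset.mul_sum]
      refine Finset.sum_congr rfl (fun i hi => ?_)
      rw [Finset.mem_Ico] at hi
      rw [show i - j = (i - (j+1)) + 1 by omega, pow_succ]
      ring
    -- the reduced sequence
    set s : ℕ → ℝ := fun m => ∑ j ∈ Finset.range (k+2), r (j+1) * bb (m+j) with hs
    have hstep : ∀ m, N ≤ m → s (m+1) = 4 * s m := by
      intro m hm
      have e1 : ∑ i ∈ Finset.range (k+3), r i * bb (m+i) = s (m+1) + r 0 * bb m := by
        rw [Finset.sum_range_succ']
        congr 1
        exact Finset.sum_congr rfl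
          (fun j _ => by rw [show m + (j+1) = (m+1)+j by omega])
      have e2 : ∑ i ∈ Finset.range (k+3), r i * bb (m+i)
          = ∑ i ∈ Finset.range (k+2), r i * bb (m+i) := by
        have hrtop' : r (k+1+1) = 0 := hrtop
        rw [Finset.sum_range_succ, hrtop']
        simp
      have e3 : ∑ i ∈ Finset.range (k+2), r i * bb (m+i)
          = (∑ i ∈ Finset.range (k+2), c i * bb (m+i)) + 4 * s m := by
        have h4s : 4 * s m = ∑ i ∈ Finset.range (k+2), 4 * (r (i+1) * bb (m+i)) := by
          show 4 * (∑ j ∈ Finset.range (k+2), r (j+1) * bb (m+j)) = _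
          rw [Finset.mul_sum]
        rw [h4s, ← Finset.sum_add_distrib]
        refine Finset.sum_congr rfl (fun i hi => ?_)
        rw [Finset.mem_range] at hi
        rw [hsplit i (by omega)]
        ring
      have e4 : ∑ i ∈ Finset.range (k+2), c i * bb (m+i) = 0 := hrec m hm
      have hcomb : s (m+1) + r 0 * bb m
          = (∑ i ∈ Finset.range (k+2), c i * bb (m+i)) + 4 * s m := by
        rw [← e1, e2, e3]
      rw [hr0, e4] at hcomb
      linarith [hcomb]
    have hpow : ∀ t : ℕ, s (N + t) = 4^t * s N := by
      intro t
      induction t with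
      | zero => simp
      | succ t iht =>
        rw [show N + (t+1) = (N + t) + 1 by omega, hstep (N+t) (by omega), iht]
        ring
    have hsN : s N = 0 := by
      have tA : Tendsto (fun m => s m / 4^m) atTop (nhds 0) := by
        have hsd : ∀ m : ℕ, s m / 4^m
            = ∑ j ∈ Finset.range (k+2), r (j+1) * (bb (m+j) / 4^m) := by
          intro m
          show (∑ j ∈ Finset.range (k+2), r (j+1) * bb (m+j)) / 4^m = _
          rw [Finset.sum_div]
          exact Finset.sum_congr rfl (fun j _ => by rw [mul_div_assoc])
        simp_rw [hsd]
        have := tendsto_finset_sum (Finset.range (k+2))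
          (fun j (_ : j ∈ Finset.range (k+2)) =>
            (bb_shift_div_pow_tendsto j).const_mul (r (j+1)))
        simpa using this
      have tB : Tendsto (fun m => s m / 4^m) atTop (nhds (s N / 4^N)) := by
        refine Tendsto.congr' ?_ tendsto_const_nhds
        filter_upwards [eventually_ge_atTop N] with m hm
        have hp := hpow (m - N)
        rw [Nat.add_sub_cancel' hm] at hp
        rw [hp, show (4:ℝ)^m = 4^(m-N) * 4^N by rw [← pow_add]; congr 1; omega]
        have h1 : ((4:ℝ)^(m-N)) ≠ 0 := by positivity
        have h2 : ((4:ℝ)^N) ≠ 0 := by positivity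
        field_simp
      have h0 := tendsto_nhds_unique tA tB
      have h4N : ((4:ℝ)^N) ≠ 0 := by positivity
      field_simp at h0
      exact h0.symm.trans (zero_mul _)
    have hlast : ∀ m, N ≤ m → ∑ j ∈ Finset.range (k+1), r (j+1) * bb (m+j) = 0 := by
      intro m hm
      have hz : ∑ j ∈ Finset.range (k+2), r (j+1) * bb (m+j) = 0 := by
        have := hpow (m - N)
        rw [Nat.add_sub_cancel' hm, hsN, mul_zero] at this
        exact this
      have hrtop' : r (k+1+1) = 0 := hrtop
      rw [Finset.sum_range_succ, hrtop'] at hz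
      simpa using hz
    exact ih k (by omega) (fun j => r (j+1)) N
      (show r (k+1) ≠ 0 by rw [hrk1]; exact hc) hlast


section DFAcount
variable {α σ : Type} [Fintype α] [Fintype σ] (M : DFA α σ)

open Classical in
/-- Finset of words of length `n` accepted starting from state `t`. -/
noncomputable def acc : ℕ → σ → Finset (List α)
  | 0, t => if t ∈ M.accept then {([] : List α)} else ∅
  | (n+1), t => Finset.univ.biUnion (fun a : α => (acc n (M.step t a)).image (a :: ·))

lemma acc_coe : ∀ (n : ℕ) (t : σ),
    (acc M n t : Set (List α)) = {w | w.length = n ∧ M.evalFrom t w ∈ M.accept} := by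
  classical
  intro n
  induction n with
  | zero =>
    intro t
    ext w
    by_cases h : t ∈ M.accept <;>
      simp [acc, h, List.length_eq_zero_iff] <;>
      rintro rfl <;> simp [h]
  | succ n ih =>
    intro t
    ext w
    simp only [Finset.mem_coe, Set.mem_setOf_eq]
    constructor
    · intro hw
      rw [acc] at hw
      rw [Finset.mem_biUnion] at hw
      obtain ⟨a, -, hw⟩ := hw
      rw [Finset.mem_image] at hw
      obtain ⟨v, hv, rfl⟩ := hw
      have hv' : v ∈ (acc M n (M.step t a) : Set (List α)) := hv
      rw [ih (M.step t a)] at hv'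
      obtain ⟨h1, h2⟩ := hv'
      exact ⟨by simp [h1], by simpa using h2⟩
    · rintro ⟨h1, h2⟩
      cases w with
      | nil => simp at h1
      | cons a v =>
        rw [acc, Finset.mem_biUnion]
        refine ⟨a, Finset.mem_univ a, ?_⟩
        rw [Finset.mem_image]
        refine ⟨v, ?_, rfl⟩
        have : v ∈ (acc M n (M.step t a) : Set (List α)) := by
          rw [ih (M.step t a)]
          exact ⟨by simpa using h1, by simpa using h2⟩
        exact this

lemma acc_card (n : ℕ) (t : σ) :
    (acc M (n+1) t).card = ∑ a : α, (acc M n (M.step t a)).card := by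
  classical
  rw [acc, Finset.card_biUnion]
  · exact Finset.sum_congr rfl (fun a _ =>
      Finset.card_image_of_injective _ (fun x y h => by injection h))
  · intro a _ b _ hab
    intro S hSa hSb w hw
    have h1 := hSa hw
    have h2 := hSb hw
    simp only [Finset.le_eq_subset, Finset.bot_eq_empty] at *
    rw [Finset.mem_image] at h1 h2
    obtain ⟨v1, _, rfl⟩ := h1
    obtain ⟨v2, _, he⟩ := h2
    exact absurd (by injection he with h _; exact h.symm) hab

end DFAcount

section Mtx
variable {α σ : Type} [Fintype α] [Fintype σ] (M : DFA α σ)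

open Classical in
noncomputable def Bm : Matrix σ σ ℝ :=
  fun t t' => ((Finset.univ.filter (fun a : α => M.step t a = t')).card : ℝ)

noncomputable def gv (n : ℕ) : σ → ℝ := fun t => ((acc M n t).card : ℝ)

lemma gv_step (n : ℕ) : gv M (n+1) = (Bm M).mulVec (gv M n) := by
  classical
  funext t
  show ((acc M (n+1) t).card : ℝ) = ∑ t', Bm M t t' * gv M n t'
  rw [acc_card]
  push_cast
  have key : ∀ t' : σ, Bm M t t' * gv M n t'
      = ∑ a ∈ Finset.univ.filter (fun a => M.step t a = t'), gv M n (M.step t a) := by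
    intro t'
    rw [Finset.sum_congr rfl (fun a ha => by rw [(Finset.mem_filter.mp ha).2])]
    rw [Finset.sum_const, nsmul_eq_mul]
    rfl
  rw [Finset.sum_congr rfl (fun t' _ => key t')]
  rw [Finset.sum_fiberwise Finset.univ (fun a => M.step t a)
    (fun a => gv M n (M.step t a))]
  rfl

variable [DecidableEq σ]

lemma gv_eq (n : ℕ) : gv M n = ((Bm M)^n).mulVec (gv M 0) := by
  induction n with
  | zero => simp [Matrix.one_mulVec, gv]
  | succ n ih =>
    rw [gv_step, ih, Matrix.mulVec_mulVec, ← pow_succ']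

lemma exists_recurrence : ∃ (k : ℕ) (d : ℕ → ℝ), d k = 1 ∧ ∀ m : ℕ,
    ∑ i ∈ Finset.range (k+1), d i * ((acc M (2*(m+i)) M.start).card : ℝ) = 0 := by
  classical
  set C : Matrix σ σ ℝ := (Bm M)^2 with hC
  refine ⟨Fintype.card σ, fun i => C.charpoly.coeff i, ?_, ?_⟩
  · have h1 := (Matrix.charpoly_monic C).coeff_natDegree
    rwa [Matrix.charpoly_natDegree_eq_dim] at h1
  · intro m
    have hCH : ∑ i ∈ Finset.range (Fintype.card σ + 1), C.charpoly.coeff i • C^i = 0 := by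
      have h1 := Matrix.aeval_self_charpoly C
      rw [Polynomial.aeval_eq_sum_range, Matrix.charpoly_natDegree_eq_dim] at h1
      exact h1
    have hCH2 : ∑ i ∈ Finset.range (Fintype.card σ + 1), C.charpoly.coeff i • C^(m+i) = 0 := by
      calc ∑ i ∈ Finset.range (Fintype.card σ + 1), C.charpoly.coeff i • C^(m+i)
          = C^m * ∑ i ∈ Finset.range (Fintype.card σ + 1), C.charpoly.coeff i • C^i := by
            rw [Finset.mul_sum]
            exact Finset.sum_congr rfl (fun i _ => by
              rw [Matrix.mul_smul, ← pow_add])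
        _ = 0 := by rw [hCH, mul_zero]
    set φ : Matrix σ σ ℝ →ₗ[ℝ] ℝ :=
      { toFun := fun A => A.mulVec (gv M 0) M.start
        map_add' := fun A B => by simp [Matrix.add_mulVec]
        map_smul' := fun c A => by simp [Matrix.smul_mulVec] } with hφ
    have h2 := congrArg φ hCH2
    simp only [map_sum, map_zero] at h2
    rw [← h2]
    refine Finset.sum_congr rfl (fun i _ => ?_)
    rw [map_smul, smul_eq_mul]
    congr 1
    have h3 : φ (C^(m+i)) = gv M (2*(m+i)) M.start := by
      rw [hC, ← pow_mul]
      show ((Bm M ^ (2*(m+i))).mulVec (gv M 0)) M.start = _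
      rw [← gv_eq]
    rw [h3]
    rfl

end Mtx


/-- the language L₂ = { w ∈ {a,b}* | |w|_a = |w|_b } (over Fin 2, a = 0,
b = 1) is not counting regular: its counting function f satisfies f(2m) = C(2m,m) and
f(2m+1) = 0, and f is not eventually equal to the counting function of any regular
language (over any finite alphabet). -/

theorem stmt11 :
    let f : ℕ → ℕ := fun m =>
      Set.ncard {w : List (Fin 2) | w.count 0 = w.count 1 ∧ w.length = m}
    (∀ m : ℕ, f (2 * m) = Nat.choose (2 * m) m) ∧
    (∀ m : ℕ, f (2 * m + 1) = 0) ∧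
    (∀ (α σ : Type) (_ : Fintype α) (_ : Fintype σ) (M : DFA α σ),
      ¬ ∃ N : ℕ, ∀ n ≥ N,
        f n = Set.ncard {w ∈ (M.accepts : Set (List α)) | w.length = n}) := by
  intro f
  refine ⟨part1, part2, ?_⟩
  intro α σ hα hσ M ⟨N, hN⟩
  letI := hα
  letI := hσ
  letI := Classical.decEq σ
  obtain ⟨k, d, hdk, hrec⟩ := exists_recurrence M
  have hcount : ∀ n : ℕ, N ≤ n →
      (f n : ℝ) = ((acc M n M.start).card : ℝ) := by
    intro n hn
    have hset : {w ∈ (M.accepts : Set (List α)) | w.length = n}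
        = ((acc M n M.start : Finset (List α)) : Set (List α)) := by
      rw [acc_coe]
      ext w
      simp only [Set.mem_setOf_eq]
      rw [DFA.mem_accepts]
      exact ⟨fun ⟨h1, h2⟩ => ⟨h2, h1⟩, fun ⟨h1, h2⟩ => ⟨h2, h1⟩⟩
    have := hN n hn
    rw [hset, Set.ncard_coe_finset] at this
    exact_mod_cast congrArg (fun x : ℕ => (x : ℝ)) this
  have hbb : ∀ m : ℕ, N ≤ m → ∀ i : ℕ, bb (m+i) = ((acc M (2*(m+i)) M.start).card : ℝ) := by
    intro m hm i
    have h1 : f (2*(m+i)) = Nat.centralBinom (m+i) := part1 (m+i)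
    have h2 : N ≤ 2*(m+i) := by omega
    have := hcount (2*(m+i)) h2
    rw [h1] at this
    exact this
  have hfinal : ∀ m, N ≤ m → ∑ i ∈ Finset.range (k+1), d i * bb (m+i) = 0 := by
    intro m hm
    rw [Finset.sum_congr rfl (fun i _ => by rw [hbb m hm i])]
    exact hrec m
  exact absurd hfinal (fun h => no_recurrence k d N (by rw [hdk]; exact one_ne_zero) h)
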